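/- arXiv:2103.10993 — 2 statements merged into one kernel-verified Lean document; each statement's English description precedes it below -/
import Mathlib

section
/- Let e ∈ 𝓡 have numerator N and denominator D in lowest terms (both monic). Assume that b − a ∉ ℕ for every root a of N and every root b of D. Then (multiset of roots of N, ∅, multiset of roots of D) is a standard factorization of e, and it is the only one: every standard factorization (X, P, W) of e has P empty, X equal to the multiset of roots of N, and W equal to the multiset of roots of D. -/
open Polynomial

/-- The set `Δ_b^a ⊆ ℂ`: equal to `{k ∈ ℕ : k < b − a}` if `b − a ∈ ℕ`,
and to `ℕ` (viewed inside `ℂ`) otherwise. -/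
def DeltaSet (a b : ℂ) : Set ℂ :=
  {x | ∃ k : ℕ, x = (k : ℂ) ∧ ∀ n : ℕ, (n : ℂ) = b - a → k < n}

/-- `b − a ∈ ℕ`. -/
def natDiff (a b : ℂ) : Prop := ∃ n : ℕ, (n : ℂ) = b - a

/-- The linear rational function `u − a`. -/
noncomputable def lin (a : ℂ) : RatFunc ℂ :=
  algebraMap (Polynomial ℂ) (RatFunc ℂ) (X - C a)

/-- The rational function `∏_{x∈X}(u−x) · ∏_{(y,z)∈P}(u−y)/(u−z) · ∏_{w∈W}(u−w)⁻¹`. -/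
noncomputable def stdProd (X : Multiset ℂ) (P : Multiset (ℂ × ℂ)) (W : Multiset ℂ) :
    RatFunc ℂ :=
  (X.map lin).prod * (P.map fun p => lin p.1 / lin p.2).prod *
    (W.map fun w => (lin w)⁻¹).prod

/-- `(X, P, W)` is a standard factorization of `e ∈ 𝓡`. -/
def IsStdFact (e : RatFunc ℂ) (X : Multiset ℂ) (P : Multiset (ℂ × ℂ)) (W : Multiset ℂ) :
    Prop :=
  e = stdProd X P W ∧
  (∀ p ∈ P, ∃ n : ℕ, 0 < n ∧ (n : ℂ) = p.2 - p.1) ∧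
  (∀ p ∈ P, ∀ q ∈ P,
    ¬(p.2 - q.1 ∈ DeltaSet p.1 p.2 ∧ p.2 - q.1 ∈ DeltaSet q.1 q.2)) ∧
  (∀ x ∈ X, ∀ p ∈ P, p.2 - x ∉ DeltaSet p.1 p.2) ∧
  (∀ x ∈ X, ∀ w ∈ W, ¬ natDiff x w) ∧
  (∀ w ∈ W, ∀ p ∈ P, w - p.1 ∉ DeltaSet p.1 p.2)

lemma lin_ne_zero (a : ℂ) : lin a ≠ 0 :=
  RatFunc.algebraMap_ne_zero (X_sub_C_ne_zero a)

lemma monic_eq_prod_roots {p : Polynomial ℂ} (hp : p.Monic) :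
    p = (p.roots.map fun a => X - C a).prod :=
  (prod_multiset_X_sub_C_of_monic_of_roots_card_eq hp
    ((splits_iff_card_roots).mp (IsAlgClosed.splits p))).symm

lemma coprime_lin_prod {a : ℂ} (t : Multiset ℂ) (ha : a ∉ t) :
    IsCoprime (X - C a) ((t.map fun b => X - C b).prod) := by
  induction t using Multiset.induction with
  | empty => simp [isCoprime_one_right]
  | cons b t iht =>
    rw [Multiset.map_cons, Multiset.prod_cons]
    refine IsCoprime.mul_right ?_ (iht fun hb => ha (Multiset.mem_cons_of_mem hb))
    exact isCoprime_X_sub_C_of_isUnit_sub (isUnit_iff_ne_zero.mpr (sub_ne_zero.mpr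
      fun hab => ha (hab ▸ Multiset.mem_cons_self b t)))

lemma coprime_of_roots_disjoint (s t : Multiset ℂ)
    (hd : ∀ a ∈ s, a ∉ t) :
    IsCoprime ((s.map fun a => X - C a).prod) ((t.map fun a => X - C a).prod) := by
  induction s using Multiset.induction with
  | empty => simp [isCoprime_one_left]
  | cons a s ih =>
    rw [Multiset.map_cons, Multiset.prod_cons]
    exact IsCoprime.mul_left (coprime_lin_prod t (hd a (Multiset.mem_cons_self a s)))
      (ih fun b hb => hd b (Multiset.mem_cons_of_mem hb))

lemma zero_mem_DeltaSet {y z : ℂ} (hn : ∃ n : ℕ, 0 < n ∧ (n : ℂ) = z - y) :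
    (0 : ℂ) ∈ DeltaSet y z := by
  obtain ⟨n, hn0, hnz⟩ := hn
  refine ⟨0, by simp, fun m hm => ?_⟩
  have : (m : ℂ) = (n : ℂ) := by rw [hm, ← hnz]
  have : m = n := Nat.cast_injective this
  omega

lemma algebraMap_prod (s : Multiset ℂ) :
    algebraMap (Polynomial ℂ) (RatFunc ℂ) ((s.map fun a => X - C a).prod)
      = (s.map lin).prod := by
  rw [map_multiset_prod, Multiset.map_map]; rfl

lemma prod_lin_ne_zero (s : Multiset ℂ) : (s.map lin).prod ≠ 0 := by
  refine Multiset.prod_ne_zero ?_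
  simp only [Multiset.mem_map]
  rintro ⟨a, -, ha⟩
  exact lin_ne_zero a ha

lemma stdProd_eq (X : Multiset ℂ) (P : Multiset (ℂ × ℂ)) (W : Multiset ℂ) :
    stdProd X P W =
      algebraMap (Polynomial ℂ) (RatFunc ℂ)
        (((X + P.map Prod.fst).map fun a => Polynomial.X - C a).prod) /
      algebraMap (Polynomial ℂ) (RatFunc ℂ)
        (((P.map Prod.snd + W).map fun a => Polynomial.X - C a).prod) := by
  rw [algebraMap_prod, algebraMap_prod, Multiset.map_add, Multiset.prod_add,
      Multiset.map_add, Multiset.prod_add, Multiset.map_map, Multiset.map_map]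
  unfold stdProd
  rw [Multiset.prod_map_div, Multiset.prod_map_inv]
  have h1 := prod_lin_ne_zero X
  have h2 := prod_lin_ne_zero W
  have h3 : (P.map fun p => lin p.2).prod ≠ 0 := by
    refine Multiset.prod_ne_zero ?_
    simp only [Multiset.mem_map]
    rintro ⟨p, -, hp⟩
    exact lin_ne_zero p.2 hp
  have e1 : P.map (lin ∘ Prod.fst) = P.map fun p => lin p.1 := rfl
  have e2 : P.map (lin ∘ Prod.snd) = P.map fun p => lin p.2 := rfl
  rw [e1, e2]
  field_simp

lemma num_denom_of_eq_div {e : RatFunc ℂ} {N D : Polynomial ℂ}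
    (hnume : e.num.Monic)
    (hN : N.Monic) (hD : D.Monic) (hco : IsCoprime N D)
    (heq : e = algebraMap (Polynomial ℂ) (RatFunc ℂ) N
      / algebraMap (Polynomial ℂ) (RatFunc ℂ) D) :
    e.num = N ∧ e.denom = D := by
  have hD0 : D ≠ 0 := hD.ne_zero
  have hN0 : N ≠ 0 := hN.ne_zero
  have hden0 : e.denom ≠ 0 := e.denom_ne_zero
  have key : e.num * D = N * e.denom := by
    have h1 : algebraMap (Polynomial ℂ) (RatFunc ℂ) e.num
        / algebraMap (Polynomial ℂ) (RatFunc ℂ) e.denom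
        = algebraMap (Polynomial ℂ) (RatFunc ℂ) N
        / algebraMap (Polynomial ℂ) (RatFunc ℂ) D := by
      rw [e.num_div_denom, heq]
    rw [div_eq_div_iff (RatFunc.algebraMap_ne_zero hden0)
      (RatFunc.algebraMap_ne_zero hD0), ← map_mul, ← map_mul] at h1
    exact RatFunc.algebraMap_injective ℂ h1
  have hdvd1 : N ∣ e.num := hco.dvd_of_dvd_mul_right ⟨e.denom, key⟩
  have hdvd2 : e.num ∣ N := (e.isCoprime_num_denom).dvd_of_dvd_mul_left
    ⟨D, (mul_comm e.denom N).trans key.symm⟩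
  have hnum : e.num = N := eq_of_monic_of_associated hnume hN
    (associated_of_dvd_dvd hdvd2 hdvd1)
  refine ⟨hnum, ?_⟩
  rw [hnum] at key
  exact (mul_left_cancel₀ hN0 key.symm)

/-- If `e ∈ 𝓡` has numerator `N` and denominator `D` (both monic) such that `b − a ∉ ℕ`
for every root `a` of `N` and every root `b` of `D`, then (roots of N, ∅, roots of D)
is a standard factorization of `e`, and it is the only one. -/
theorem stdFact_generic (e : RatFunc ℂ) (he : e ≠ 0)
    (hnum : e.num.Monic) (hden : e.denom.Monic)
    (h : ∀ a b : ℂ, e.num.IsRoot a → e.denom.IsRoot b → ¬ natDiff a b) :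
    IsStdFact e e.num.roots 0 e.denom.roots ∧
      ∀ (X : Multiset ℂ) (P : Multiset (ℂ × ℂ)) (W : Multiset ℂ),
        IsStdFact e X P W → P = 0 ∧ X = e.num.roots ∧ W = e.denom.roots := by
  constructor
  · refine ⟨?_, by simp, by simp, by simp, ?_, by simp⟩
    · rw [stdProd_eq]
      simp only [Multiset.map_zero, zero_add, add_zero]
      rw [← monic_eq_prod_roots hnum, ← monic_eq_prod_roots hden, e.num_div_denom]
    · intro x hx w hw
      exact h x w (mem_roots'.mp hx).2 (mem_roots'.mp hw).2
  · rintro X P W ⟨heq, h1, h2, h3, h4, h5⟩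
    have hdisj : ∀ a ∈ X + P.map Prod.fst, a ∉ P.map Prod.snd + W := by
      intro a ha hb
      rw [Multiset.mem_add] at ha hb
      rcases ha with haX | haP <;> rcases hb with hbP | hbW
      · obtain ⟨p, hp, hpa⟩ := Multiset.mem_map.mp hbP
        exact h3 a haX p hp (by rw [← hpa, sub_self]; exact zero_mem_DeltaSet (h1 p hp))
      · exact h4 a haX a hbW ⟨0, by simp⟩
      · obtain ⟨q, hq, hqa⟩ := Multiset.mem_map.mp haP
        obtain ⟨p, hp, hpa⟩ := Multiset.mem_map.mp hbP
        refine h2 p hp q hq ⟨?_, ?_⟩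
        · rw [hqa, ← hpa, sub_self]; exact zero_mem_DeltaSet (h1 p hp)
        · rw [hpa, ← hqa, sub_self]; exact zero_mem_DeltaSet (h1 q hq)
      · obtain ⟨q, hq, hqa⟩ := Multiset.mem_map.mp haP
        exact h5 a hbW q hq (by rw [← hqa, sub_self]; exact zero_mem_DeltaSet (h1 q hq))
    have hNmon : (((X + P.map Prod.fst).map fun a => Polynomial.X - C a).prod).Monic :=
      monic_multiset_prod_of_monic _ _ fun a _ => monic_X_sub_C a
    have hDmon : (((P.map Prod.snd + W).map fun a => Polynomial.X - C a).prod).Monic :=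
      monic_multiset_prod_of_monic _ _ fun a _ => monic_X_sub_C a
    have hco := coprime_of_roots_disjoint _ _ hdisj
    obtain ⟨hnumN, hdenD⟩ :=
      num_denom_of_eq_div hnum hNmon hDmon hco (heq.trans (stdProd_eq X P W))
    have hroots1 : e.num.roots = X + P.map Prod.fst := by
      rw [hnumN, roots_multiset_prod_X_sub_C]
    have hroots2 : e.denom.roots = P.map Prod.snd + W := by
      rw [hdenD, roots_multiset_prod_X_sub_C]
    have hP : P = 0 := by
      refine Multiset.eq_zero_of_forall_notMem fun p hp => ?_
      obtain ⟨n, hn0, hn⟩ := h1 p hp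
      have hy : p.1 ∈ e.num.roots := by
        rw [hroots1]
        exact Multiset.mem_add.mpr (Or.inr (Multiset.mem_map_of_mem _ hp))
      have hz : p.2 ∈ e.denom.roots := by
        rw [hroots2]
        exact Multiset.mem_add.mpr (Or.inl (Multiset.mem_map_of_mem _ hp))
      exact h p.1 p.2 (mem_roots'.mp hy).2 (mem_roots'.mp hz).2 ⟨n, hn⟩
    subst hP
    simp only [Multiset.map_zero, add_zero, zero_add] at hroots1 hroots2
    exact ⟨rfl, hroots1.symm, hroots2.symm⟩
end

section
/- Let e ∈ 𝓡, let y₀ be a zero and z₀ a pole of e with z₀ − y₀ ∈ ℕ, and assume the minimality property (H1): for every zero y and every pole z of e, z − y ∈ ℕ implies z − y ≥ z₀ − y₀. Then every standard factorization (X, P, W) of e satisfies (y₀, z₀) ∈ P. -/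
open Polynomial

noncomputable def linProd (S : Multiset ℂ) : Polynomial ℂ :=
  (S.map fun s => Polynomial.X - Polynomial.C s).prod

lemma linProd_monic (S : Multiset ℂ) : (linProd S).Monic :=
  monic_multiset_prod_of_monic _ _ fun a _ => monic_X_sub_C a

lemma linProd_isRoot (S : Multiset ℂ) (a : ℂ) : (linProd S).IsRoot a ↔ a ∈ S := by
  simp only [linProd, IsRoot, eval_multiset_prod, Multiset.map_map, Function.comp,
    eval_sub, eval_X, eval_C, Multiset.prod_eq_zero_iff, Multiset.mem_map, sub_eq_zero]
  constructor
  · rintro ⟨s, hs, rfl⟩; exact hs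
  · intro h; exact ⟨a, h, rfl⟩

lemma stdProd_eq_s7 (Xs : Multiset ℂ) (P : Multiset (ℂ × ℂ)) (Ws : Multiset ℂ) :
    stdProd Xs P Ws = algebraMap (Polynomial ℂ) (RatFunc ℂ) (linProd (Xs + P.map Prod.fst)) /
      algebraMap (Polynomial ℂ) (RatFunc ℂ) (linProd (P.map Prod.snd + Ws)) := by
  simp only [stdProd, linProd, lin, map_multiset_prod, map_mul, Multiset.map_add,
    Multiset.map_map, Multiset.prod_add, Function.comp_def, Multiset.prod_map_div,
    Multiset.prod_map_mul, Multiset.prod_map_inv, div_eq_mul_inv, mul_inv]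
  simp only [show lin = fun a => algebraMap (Polynomial ℂ) (RatFunc ℂ) (X - C a) from rfl]
  ring

lemma mem_deltaSet_natCast {y z : ℂ} {n : ℕ} (hn : (n : ℂ) = z - y) (m : ℕ) :
    (m : ℂ) ∈ DeltaSet y z ↔ m < n := by
  constructor
  · rintro ⟨k, hk, hlt⟩
    have hmk : m = k := Nat.cast_inj.mp hk
    exact hmk ▸ hlt n hn
  · intro h
    refine ⟨m, rfl, fun n' hn' => ?_⟩
    have : n' = n := Nat.cast_inj.mp (hn'.trans hn.symm)
    omega

lemma num_denom_eq {e : RatFunc ℂ} {N D : Polynomial ℂ} (hnum : e.num.Monic)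
    (hN : N.Monic) (hD : D.Monic) (hcop : IsCoprime N D)
    (h : e = algebraMap (Polynomial ℂ) (RatFunc ℂ) N / algebraMap (Polynomial ℂ) (RatFunc ℂ) D) :
    e.num = N ∧ e.denom = D := by
  have hD0 : algebraMap (Polynomial ℂ) (RatFunc ℂ) D ≠ 0 :=
    RatFunc.algebraMap_ne_zero hD.ne_zero
  have hden0 : algebraMap (Polynomial ℂ) (RatFunc ℂ) e.denom ≠ 0 :=
    RatFunc.algebraMap_ne_zero e.denom_ne_zero
  have hdiv : algebraMap (Polynomial ℂ) (RatFunc ℂ) e.num /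
      algebraMap (Polynomial ℂ) (RatFunc ℂ) e.denom =
      algebraMap (Polynomial ℂ) (RatFunc ℂ) N / algebraMap (Polynomial ℂ) (RatFunc ℂ) D := by
    rw [RatFunc.num_div_denom]; exact h
  rw [div_eq_div_iff hden0 hD0] at hdiv
  have key : e.num * D = N * e.denom := by
    apply RatFunc.algebraMap_injective ℂ
    rw [map_mul, map_mul]; exact hdiv
  have d1 : e.num ∣ N := (RatFunc.isCoprime_num_denom e).dvd_of_dvd_mul_right ⟨D, key.symm⟩
  have d2 : N ∣ e.num := hcop.dvd_of_dvd_mul_right ⟨e.denom, key⟩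
  have d3 : e.denom ∣ D :=
    (RatFunc.isCoprime_num_denom e).symm.dvd_of_dvd_mul_right
      ⟨N, by rw [mul_comm D, key, mul_comm]⟩
  have d4 : D ∣ e.denom :=
    hcop.symm.dvd_of_dvd_mul_right ⟨e.num, by linear_combination -key⟩
  exact ⟨eq_of_monic_of_associated hnum hN (associated_of_dvd_dvd d1 d2),
    eq_of_monic_of_associated (e.monic_denom) hD (associated_of_dvd_dvd d3 d4)⟩

/-- Let `y₀` be a zero and `z₀` a pole of `e ∈ 𝓡` with `z₀ − y₀ ∈ ℕ`, minimal among all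
differences `z − y ∈ ℕ` of a pole `z` and a zero `y` of `e` (hypothesis (H1)). Then every
standard factorization `(X, P, W)` of `e` satisfies `(y₀, z₀) ∈ P`. -/
theorem stdFact_mem (e : RatFunc ℂ) (he : e ≠ 0)
    (hnum : e.num.Monic) (hden : e.denom.Monic)
    (y₀ z₀ : ℂ) (hy₀ : e.num.IsRoot y₀) (hz₀ : e.denom.IsRoot z₀)
    (n₀ : ℕ) (hn₀ : (n₀ : ℂ) = z₀ - y₀)
    (H1 : ∀ y z : ℂ, e.num.IsRoot y → e.denom.IsRoot z →
      ∀ m : ℕ, (m : ℂ) = z - y → n₀ ≤ m) :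
    ∀ (X : Multiset ℂ) (P : Multiset (ℂ × ℂ)) (W : Multiset ℂ),
      IsStdFact e X P W → (y₀, z₀) ∈ P := by
  intro Xs P Ws hF
  obtain ⟨hfac, hp1, hp2, hp3, hp4, hp5⟩ := hF
  have hzero : ∀ p ∈ P, (0 : ℂ) ∈ DeltaSet p.1 p.2 := by
    intro p hp
    obtain ⟨n, hn0, hn⟩ := hp1 p hp
    have := (mem_deltaSet_natCast hn 0).mpr hn0
    simpa using this
  have heN : e = algebraMap (Polynomial ℂ) (RatFunc ℂ) (linProd (Xs + P.map Prod.fst)) /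
      algebraMap (Polynomial ℂ) (RatFunc ℂ) (linProd (P.map Prod.snd + Ws)) := by
    rw [hfac, stdProd_eq_s7]
  have hdisj : ∀ a : ℂ, a ∈ Xs + P.map Prod.fst → a ∈ P.map Prod.snd + Ws → False := by
    intro a ha hb
    rcases Multiset.mem_add.mp ha with hx | hy
    · rcases Multiset.mem_add.mp hb with hz | hw
      · obtain ⟨p, hp, rfl⟩ := Multiset.mem_map.mp hz
        exact hp3 p.2 hx p hp (by rw [sub_self]; exact hzero p hp)
      · exact hp4 a hx a hw ⟨0, by simp⟩
    · obtain ⟨q, hq, rfl⟩ := Multiset.mem_map.mp hy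
      rcases Multiset.mem_add.mp hb with hz | hw
      · obtain ⟨p, hp, hpa⟩ := Multiset.mem_map.mp hz
        have h0 : p.2 - q.1 = 0 := by rw [hpa, sub_self]
        refine hp2 p hp q hq ⟨?_, ?_⟩ <;> rw [h0]
        · exact hzero p hp
        · exact hzero q hq
      · exact hp5 q.1 hw q hq (by rw [sub_self]; exact hzero q hq)
  have hcop : IsCoprime (linProd (Xs + P.map Prod.fst)) (linProd (P.map Prod.snd + Ws)) := by
    rw [Polynomial.isCoprime_iff_aeval_ne_zero_of_isAlgClosed (k := ℂ) ℂ]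
    intro a
    by_contra hcon
    push_neg at hcon
    obtain ⟨h1', h2'⟩ := hcon
    rw [Polynomial.aeval_def, ← Polynomial.eval_map] at h1' h2'
    simp only [Algebra.algebraMap_self, Polynomial.map_id] at h1' h2'
    exact hdisj a ((linProd_isRoot _ a).mp h1') ((linProd_isRoot _ a).mp h2')
  obtain ⟨hNnum, hDden⟩ := num_denom_eq hnum (linProd_monic _) (linProd_monic _) hcop heN
  have hy : y₀ ∈ Xs + P.map Prod.fst := (linProd_isRoot _ _).mp (hNnum ▸ hy₀)
  have hz : z₀ ∈ P.map Prod.snd + Ws := (linProd_isRoot _ _).mp (hDden ▸ hz₀)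
  have hle : ∀ p ∈ P, ∀ n : ℕ, (n : ℂ) = p.2 - p.1 → n₀ ≤ n := by
    intro p hp n hn
    refine H1 p.1 p.2 ?_ ?_ n hn
    · rw [hNnum]
      exact (linProd_isRoot _ _).mpr (Multiset.mem_add.mpr
        (Or.inr (Multiset.mem_map_of_mem Prod.fst hp)))
    · rw [hDden]
      exact (linProd_isRoot _ _).mpr (Multiset.mem_add.mpr
        (Or.inl (Multiset.mem_map_of_mem Prod.snd hp)))
  rcases Multiset.mem_add.mp hy with hyX | hyP
  · rcases Multiset.mem_add.mp hz with hzP | hzW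
    · obtain ⟨p, hp, hpz⟩ := Multiset.mem_map.mp hzP
      obtain ⟨n, hn0, hn⟩ := hp1 p hp
      have hnot := hp3 y₀ hyX p hp
      have heq : p.2 - y₀ = (n₀ : ℂ) := by rw [hpz, ← hn₀]
      rw [heq] at hnot
      have hge : ¬ n₀ < n := fun hlt => hnot ((mem_deltaSet_natCast hn n₀).mpr hlt)
      have hnn : n = n₀ := le_antisymm (not_lt.mp hge) (hle p hp n hn)
      have h1 : (n₀ : ℂ) = p.2 - p.1 := by rw [← hnn]; exact hn
      have hfst : p.1 = y₀ := by linear_combination h1 - hn₀ + hpz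
      have : p = (y₀, z₀) := Prod.ext hfst hpz
      exact this ▸ hp
    · exact absurd ⟨n₀, hn₀⟩ (hp4 y₀ hyX z₀ hzW)
  · obtain ⟨q, hq, rfl⟩ := Multiset.mem_map.mp hyP
    obtain ⟨nq, hnq0, hnq⟩ := hp1 q hq
    have hleq := hle q hq nq hnq
    rcases Multiset.mem_add.mp hz with hzP | hzW
    · obtain ⟨p, hp, hpz⟩ := Multiset.mem_map.mp hzP
      obtain ⟨np, hnp0, hnp⟩ := hp1 p hp
      have hlep := hle p hp np hnp
      have hnot := hp2 p hp q hq
      have heq : p.2 - q.1 = (n₀ : ℂ) := by rw [hpz, ← hn₀]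
      rw [heq] at hnot
      have hcase : ¬ n₀ < np ∨ ¬ n₀ < nq := by
        by_contra hc
        push_neg at hc
        exact hnot ⟨(mem_deltaSet_natCast hnp n₀).mpr hc.1,
          (mem_deltaSet_natCast hnq n₀).mpr hc.2⟩
      rcases hcase with h | h
      · have hnn : np = n₀ := le_antisymm (not_lt.mp h) hlep
        have h1 : (n₀ : ℂ) = p.2 - p.1 := by rw [← hnn]; exact hnp
        have hfst : p.1 = q.1 := by linear_combination h1 - hn₀ + hpz
        have : p = (q.1, z₀) := Prod.ext hfst hpz
        exact this ▸ hp
      · have hnn : nq = n₀ := le_antisymm (not_lt.mp h) hleq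
        have h1 : (n₀ : ℂ) = q.2 - q.1 := by rw [← hnn]; exact hnq
        have hsnd : q.2 = z₀ := by linear_combination hn₀ - h1
        have : q = (q.1, z₀) := Prod.ext rfl hsnd
        exact this ▸ hq
    · have hnot := hp5 z₀ hzW q hq
      rw [← hn₀] at hnot
      have h : nq ≤ n₀ := not_lt.mp (fun hlt => hnot ((mem_deltaSet_natCast hnq n₀).mpr hlt))
      have hnn : nq = n₀ := le_antisymm h hleq
      have h1 : (n₀ : ℂ) = q.2 - q.1 := by rw [← hnn]; exact hnq
      have hsnd : q.2 = z₀ := by linear_combination hn₀ - h1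
      have : q = (q.1, z₀) := Prod.ext rfl hsnd
      exact this ▸ hq
end
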